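/- For every positive real x, the series Σ_{k=1}^∞ 2^{k-1} (x^{2^{-k}} - 1)^2 converges and its sum equals x - 1 - log x. -/

import Mathlib

open Real Filter Finset Topology

theorem hasSum_log_series (x : ℝ) (hx : 0 < x) :
    HasSum (fun k : ℕ => (2 : ℝ) ^ k * (x ^ ((2 : ℝ) ^ (-((k : ℝ) + 1))) - 1) ^ 2)
      (x - 1 - Real.log x) := by
  set a : ℕ → ℝ := fun k => (2:ℝ) ^ k * (x ^ ((2:ℝ) ^ (-(k:ℝ))) - 1) with ha
  have key : ∀ k : ℕ, (2:ℝ) ^ k * (x ^ ((2:ℝ) ^ (-((k:ℝ)+1))) - 1) ^ 2 = a k - a (k+1) := by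
    intro k
    have h2 : (2:ℝ)^(-(k:ℝ)) = (2:ℝ)^(-((k:ℝ)+1)) * 2 := by
      rw [← Real.rpow_add_one (by norm_num : (2:ℝ) ≠ 0) (-((k:ℝ)+1))]
      norm_num
    have hy : x ^ ((2:ℝ) ^ (-(k:ℝ))) = (x ^ ((2:ℝ) ^ (-((k:ℝ)+1))))^2 := by
      rw [h2, Real.rpow_mul hx.le, Real.rpow_two]
    simp only [ha]
    push_cast
    rw [hy]
    ring
  have hnn : ∀ k : ℕ, 0 ≤ (2:ℝ) ^ k * (x ^ ((2:ℝ) ^ (-((k:ℝ)+1))) - 1) ^ 2 := by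
    intro k; positivity
  rw [hasSum_iff_tendsto_nat_of_nonneg hnn]
  have hsum : ∀ n : ℕ, ∑ k ∈ range n, (2:ℝ) ^ k * (x ^ ((2:ℝ) ^ (-((k:ℝ)+1))) - 1) ^ 2
      = a 0 - a n := by
    intro n
    rw [Finset.sum_congr rfl (fun k _ => key k), Finset.sum_range_sub' a n]
  have ha0 : a 0 = x - 1 := by simp [ha]
  have hlim : Tendsto a atTop (𝓝 (Real.log x)) := by
    rcases eq_or_ne x 1 with rfl | hx1
    · simp only [ha, Real.log_one, Real.one_rpow, sub_self, mul_zero]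
      exact tendsto_const_nhds
    · have hlog : Real.log x ≠ 0 := Real.log_ne_zero_of_pos_of_ne_one hx hx1
      set t : ℕ → ℝ := fun n => Real.log x * (2:ℝ)^(-(n:ℝ)) with ht
      have htne : ∀ n, t n ≠ 0 := fun n =>
        mul_ne_zero hlog (ne_of_gt (Real.rpow_pos_of_pos (by norm_num) _))
      have ht0 : Tendsto t atTop (𝓝 0) := by
        have : Tendsto (fun n : ℕ => (2:ℝ)^(-(n:ℝ))) atTop (𝓝 0) := by
          have : ∀ n : ℕ, (2:ℝ)^(-(n:ℝ)) = ((1:ℝ)/2)^n := by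
            intro n
            rw [Real.rpow_neg (by norm_num), Real.rpow_natCast]
            simp
          simp only [this]
          exact tendsto_pow_atTop_nhds_zero_of_lt_one (by norm_num) (by norm_num)
        have h := this.const_mul (Real.log x)
        rw [mul_zero] at h
        exact h
      have ht0' : Tendsto t atTop (𝓝[≠] 0) :=
        tendsto_nhdsWithin_of_tendsto_nhds_of_eventually_within _ ht0
          (Eventually.of_forall fun n => htne n)
      have hslope : Tendsto (fun y : ℝ => (Real.exp y - 1) / y) (𝓝[≠] 0) (𝓝 1) := by
        have h := (hasDerivAt_iff_tendsto_slope).1 (Real.hasDerivAt_exp 0)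
        have hsl : slope Real.exp 0 = fun y : ℝ => (Real.exp y - 1) / y := by
          funext y
          rw [slope_def_field, Real.exp_zero]
          ring
        rw [hsl] at h
        simpa using h
      have hcomp : Tendsto (fun n => (Real.exp (t n) - 1) / t n) atTop (𝓝 1) :=
        hslope.comp ht0'
      have heq : ∀ n : ℕ, a n = Real.log x * ((Real.exp (t n) - 1) / t n) := by
        intro n
        have hxr : x ^ ((2:ℝ)^(-(n:ℝ))) = Real.exp (t n) := by
          rw [Real.rpow_def_of_pos hx]
        have hs : t n = Real.log x / (2:ℝ)^n := by
          simp only [ht]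
          rw [Real.rpow_neg (by norm_num : (0:ℝ) ≤ 2), Real.rpow_natCast, div_eq_mul_inv]
        show (2:ℝ)^n * (x ^ ((2:ℝ)^(-(n:ℝ))) - 1) = _
        rw [hxr, hs]
        have h2 : ((2:ℝ)^n) ≠ 0 := by positivity
        field_simp
      have hmul : Tendsto (fun n => Real.log x * ((Real.exp (t n) - 1) / t n)) atTop
          (𝓝 (Real.log x)) := by
        have := hcomp.const_mul (Real.log x)
        simpa [mul_comm] using this
      exact hmul.congr fun n => (heq n).symm
  have h : Tendsto (fun n => a 0 - a n) atTop (𝓝 (a 0 - Real.log x)) :=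
    tendsto_const_nhds.sub hlim
  rw [ha0] at h
  exact h.congr fun n => by rw [hsum n, ha0]
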